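/- Any greedy schedule of a DAG with total work W (number of vertices) and span S (length in vertices of the longest directed path) on P processors completes in at most W/P + S time steps (Brent-type bound): if at every step the schedule executes min(P, number of ready vertices) vertices, then the total number of steps T satisfies T ≤ W/P + (P-1)S/P, hence T ≤ ⌈W/P⌉ + S. -/

import Mathlib

/-- Brent-type bound: any greedy schedule of a DAG with work `W` (number of
vertices) and span `Sp` (maximum number of vertices on a directed path) on `P`
processors completes in `T` steps with `P*T ≤ W + (P-1)*Sp`, hence
`T ≤ ⌈W/P⌉ + Sp`. -/
theorem stmt_3 {V : Type*} [Fintype V] [DecidableEq V] (edge : V → V → Prop)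
    (hacyc : ∀ v : V, ¬ Relation.TransGen edge v v)
    (P : ℕ) (hP : 0 < P) (S : ℕ → Finset V) (T W Sp : ℕ)
    (hW : W = Fintype.card V)
    -- `Sp` is the maximum number of vertices on any directed path
    (hSpmax : ∀ l : List V, List.Chain' edge l → l.length ≤ Sp)
    (hSpwit : ∃ l : List V, List.Chain' edge l ∧ l.length = Sp)
    (hdisj : ∀ t t', t ≠ t' → Disjoint (S t) (S t'))
    (hdep : ∀ t v, v ∈ S t → ∀ u, Relation.TransGen edge u v → ∃ t' < t, u ∈ S t')
    -- greedy: at each step, execute `min P r` ready vertices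
    (hgreedy : ∀ t, (S t).card =
      min P (Set.ncard {v : V |
        (∀ u, Relation.TransGen edge u v → ∃ t' < t, u ∈ S t') ∧ ¬ ∃ t' < t, v ∈ S t'}))
    -- the schedule completes in exactly `T` steps
    (hT : ∀ v : V, ∃ t < T, v ∈ S t)
    (hTmin : ∀ T' < T, ∃ v : V, ∀ t < T', v ∉ S t) :
    P * T ≤ W + (P - 1) * Sp ∧ T ≤ (W + P - 1) / P + Sp := by
  classical
  clear hSpwit hT
  haveI hirr : IsIrrefl V (Relation.TransGen edge) := ⟨hacyc⟩
  have hwf : WellFounded (Relation.TransGen edge) :=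
    Finite.wellFounded_of_trans_of_irrefl _
  -- the set of vertices not yet executed before step `t`
  set U : ℕ → Set V := fun t => {v | ¬ ∃ t' < t, v ∈ S t'} with hUdef
  -- the set of ready vertices at step `t`
  set ready : ℕ → Set V := fun t => {v : V |
      (∀ u, Relation.TransGen edge u v → ∃ t' < t, u ∈ S t') ∧ ¬ ∃ t' < t, v ∈ S t'}
    with hreadydef
  have hgreedy' : ∀ t, (S t).card = min P (ready t).ncard := hgreedy
  have hUmono : ∀ t, U (t + 1) ⊆ U t := by
    intro t v hv h
    obtain ⟨t', ht', h'⟩ := h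
    exact hv ⟨t', ht'.trans (Nat.lt_succ_self t), h'⟩
  have hSsub : ∀ t, ↑(S t) ⊆ ready t := by
    intro t v hv
    refine ⟨hdep t v hv, ?_⟩
    rintro ⟨t', ht', hm⟩
    exact (Finset.disjoint_left.mp (hdisj t' t ht'.ne) hm) hv
  have hUne : ∀ t < T, (U t).Nonempty := by
    intro t ht
    obtain ⟨v, hv⟩ := hTmin t ht
    exact ⟨v, fun ⟨t', ht', h⟩ => hv t' ht' h⟩
  have hreadyne : ∀ t < T, (ready t).Nonempty := by
    intro t ht
    obtain ⟨u, hu, humin⟩ := hwf.has_min (U t) (hUne t ht)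
    refine ⟨u, ?_, hu⟩
    intro w hw
    by_contra h
    exact humin w h hw
  have hcardpos : ∀ t < T, 1 ≤ (S t).card := by
    intro t ht
    rw [hgreedy' t]
    exact le_min hP ((Set.ncard_pos (Set.toFinite _)).mpr (hreadyne t ht))
  have hcardle : ∀ t, (S t).card ≤ P := fun t => (hgreedy' t).le.trans (min_le_left _ _)
  -- longest chain among unexecuted vertices
  set chainIn : ℕ → ℕ → Prop :=
    fun t n => ∃ l : List V, List.Chain' edge l ∧ (∀ v ∈ l, v ∈ U t) ∧ l.length = n
    with hchainIndef
  set L : ℕ → ℕ := fun t => Nat.findGreatest (chainIn t) Sp with hLdef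
  have hchain0 : ∀ t, chainIn t 0 := fun t => ⟨[], List.isChain_nil, by simp⟩
  have hLle : ∀ t, L t ≤ Sp := fun t => Nat.findGreatest_le Sp
  have hLspec : ∀ t, chainIn t (L t) :=
    fun t => Nat.findGreatest_spec (Nat.zero_le Sp) (hchain0 t)
  have hLmono : ∀ t, L (t + 1) ≤ L t := by
    intro t
    obtain ⟨l, hc, hm, hl⟩ := hLspec (t + 1)
    exact Nat.le_findGreatest (hLle (t + 1)) ⟨l, hc, fun v hv => hUmono t (hm v hv), hl⟩
  have hLpos : ∀ t < T, 1 ≤ L t := by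
    intro t ht
    obtain ⟨v, hv⟩ := hUne t ht
    exact Nat.le_findGreatest (hSpmax [v] (List.isChain_singleton v)) ⟨[v], List.isChain_singleton v, by simpa using hv, rfl⟩
  -- strict decrease at unsaturated steps
  have hstrict : ∀ t < T, (S t).card < P → L (t + 1) < L t := by
    intro t ht hunsat
    rcases Nat.eq_zero_or_pos (L (t + 1)) with h0 | h1
    · rw [h0]; exact hLpos t ht
    -- the schedule executed exactly the ready vertices
    have hrlt : (ready t).ncard < P := by
      by_contra h
      push_neg at h
      rw [hgreedy' t, min_eq_left h] at hunsat
      exact lt_irrefl _ hunsat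
    have hcard : (S t).card = (ready t).ncard := by
      rw [hgreedy' t, min_eq_right hrlt.le]
    have hSeq : ↑(S t) = ready t := by
      refine Set.eq_of_subset_of_ncard_le (hSsub t) ?_ (Set.toFinite _)
      rw [Set.ncard_coe_finset, hcard]
    -- take a longest chain of still-unexecuted vertices at time t+1
    obtain ⟨l, hc, hm, hl⟩ := hLspec (t + 1)
    obtain ⟨v, l', rfl⟩ : ∃ v l', l = v :: l' := by
      cases l with
      | nil => simp at hl; omega
      | cons a l' => exact ⟨a, l', rfl⟩
    have hvU1 : v ∈ U (t + 1) := hm v (by simp)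
    have hvUt : v ∈ U t := hUmono t hvU1
    have hvnotS : v ∉ S t := by
      intro h
      exact hvU1 ⟨t, Nat.lt_succ_self t, h⟩
    have hvnotready : v ∉ ready t := by
      rw [← hSeq]; exact fun h => hvnotS h
    -- v has an unexecuted ancestor
    have hanc : ∃ u, Relation.TransGen edge u v ∧ u ∈ U t := by
      by_contra h
      push_neg at h
      refine hvnotready ⟨?_, hvUt⟩
      intro u hu
      have := h u hu
      simp only [hUdef, Set.mem_setOf_eq, not_not] at this
      exact this
    obtain ⟨u, huv, huU⟩ := hanc
    -- extract an unexecuted vertex with a direct edge into v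
    obtain ⟨w, huw, hwv⟩ := Relation.TransGen.tail'_iff.mp huv
    have hwU : w ∈ U t := by
      rcases Relation.reflTransGen_iff_eq_or_transGen.mp huw with rfl | htg
      · exact huU
      · intro hex
        obtain ⟨t', ht', hw'⟩ := hex
        obtain ⟨t'', ht'', hu''⟩ := hdep t' w hw' u htg
        exact huU ⟨t'', ht''.trans ht', hu''⟩
    -- extend the chain
    have hnewchain : chainIn t (L (t + 1) + 1) := by
      refine ⟨w :: v :: l', ?_, ?_, by simpa using hl⟩
      · exact List.IsChain.cons_cons hwv hc
      · intro x hx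
        rcases List.mem_cons.mp hx with rfl | hx'
        · exact hwU
        · exact hUmono t (hm x hx')
    have hnewchain2 := hnewchain
    obtain ⟨l2, hc2, _, hl2⟩ := hnewchain2
    have hbound : L (t + 1) + 1 ≤ Sp := hl2 ▸ hSpmax l2 hc2
    exact Nat.lt_of_succ_le (Nat.le_findGreatest hbound hnewchain)
  -- counting lemma: number of unsaturated steps before T is at most Sp
  have hcount : ∀ n ≤ T,
      ((Finset.range n).filter (fun t => (S t).card < P)).card + L n ≤ L 0 := by
    intro n hn
    induction n with
    | zero => simp
    | succ m ih =>
      have hm : m ≤ T := le_of_lt (Nat.lt_of_succ_le hn)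
      have ihm := ih hm
      rw [Finset.range_add_one, Finset.filter_insert]
      by_cases hu : (S m).card < P
      · rw [if_pos hu, Finset.card_insert_of_notMem (by simp)]
        have := hstrict m (Nat.lt_of_succ_le hn) hu
        omega
      · rw [if_neg hu]
        have := hLmono m
        omega
  have hunsatcount :
      ((Finset.range T).filter (fun t => (S t).card < P)).card ≤ Sp := by
    have := hcount T le_rfl
    have := hLle 0
    omega
  -- total work bound
  have hwork : ∑ t ∈ Finset.range T, (S t).card ≤ W := by
    rw [← Finset.card_biUnion (fun x _ y _ hxy => hdisj x y hxy), hW]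
    exact Finset.card_le_card (Finset.subset_univ _)
  -- main bound
  have hmain : P * T ≤ W + (P - 1) * Sp := by
    have hPT : P * T = ∑ _t ∈ Finset.range T, P := by
      rw [Finset.sum_const, Finset.card_range, smul_eq_mul, mul_comm]
    have hterm : ∀ t ∈ Finset.range T,
        P ≤ (S t).card + (P - 1) * (if (S t).card < P then 1 else 0) := by
      intro t ht
      rw [Finset.mem_range] at ht
      by_cases hu : (S t).card < P
      · rw [if_pos hu]
        have := hcardpos t ht
        omega
      · rw [if_neg hu]
        omega
    calc P * T = ∑ _t ∈ Finset.range T, P := hPT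
      _ ≤ ∑ t ∈ Finset.range T,
            ((S t).card + (P - 1) * (if (S t).card < P then 1 else 0)) :=
          Finset.sum_le_sum hterm
      _ = (∑ t ∈ Finset.range T, (S t).card)
            + (P - 1) * ((Finset.range T).filter (fun t => (S t).card < P)).card := by
          rw [Finset.sum_add_distrib, ← Finset.mul_sum]
          congr 1
          rw [Finset.sum_boole, Nat.cast_id]
      _ ≤ W + (P - 1) * Sp := by
          have := Nat.mul_le_mul_left (P - 1) hunsatcount
          omega
  refine ⟨hmain, ?_⟩
  -- derive the second bound
  rcases le_or_gt T Sp with hTS | hTS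
  · exact hTS.trans (Nat.le_add_left Sp _)
  · have h1 : P * (T - Sp) + P * Sp = P * T := by
      rw [← Nat.mul_add, Nat.sub_add_cancel hTS.le]
    have h3 : (P - 1) * Sp + Sp = P * Sp := by
      have : (P - 1) * Sp + 1 * Sp = (P - 1 + 1) * Sp := (Nat.add_mul _ _ _).symm
      rw [one_mul] at this
      rw [this, Nat.sub_add_cancel hP]
    have h2 : P * (T - Sp) ≤ W := by
      have := hmain
      omega
    have h4 : T - Sp ≤ W / P := (Nat.le_div_iff_mul_le hP).mpr (by rw [Nat.mul_comm]; exact h2)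
    have h5 : W / P ≤ (W + P - 1) / P := Nat.div_le_div_right (by omega)
    omega
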